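/- arXiv:2605.13800 — 3 statements merged into one kernel-verified Lean document; each statement's English description precedes it below -/
import Mathlib

section
/- Let T be a minimum-cost arborescence rooted at r in G with the non-root vertices labeled v₁,…,v_{n−1}, and for each i let e_i = (p(v_i), v_i) be the edge of T entering v_i and let ρ_i be the unique shortest path in G − e_i from the component X(v_i) of r in T − e_i to v_i. Color each edge of ⋃_{i=1}^{n−1} ρ_i with the least index i of a path ρ_i containing it. Say that color i is charged to an ordered pair of distinct vertices (x,y) if ρ_i contains a subpath from x to y, some outgoing edge of x has color i, and some incoming edge of y has color i. Then every ordered pair (x,y) of distinct vertices is charged by at most three colors. -/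
/-- `p` is a (simple) directed path from `u` to `v` using only edges in `E`,
encoded as its list of vertices. -/
def IsDipath {V : Type*} (E : Set (V × V)) (u v : V) (p : List V) : Prop :=
  p.Nodup ∧ p.head? = some u ∧ p.getLast? = some v ∧
    p.Chain' (fun a b => (a, b) ∈ E)

/-- The list of (directed) edges of a path given by its list of vertices. -/
def pathEdges {V : Type*} (p : List V) : List (V × V) := p.zip p.tail

/-- The cost (length) of a path: the sum of the costs of its edges. -/
def pathCost {V : Type*} (cost : V × V → ℝ) (p : List V) : ℝ :=
  ((pathEdges p).map cost).sum

/-- `p` is a shortest (minimum-cost) path from `u` to `v` in the digraph with edge set `E`. -/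
def IsShortestDipath {V : Type*} (E : Set (V × V)) (cost : V × V → ℝ)
    (u v : V) (p : List V) : Prop :=
  IsDipath E u v p ∧ ∀ q, IsDipath E u v q → pathCost cost p ≤ pathCost cost q

/-- `p` is a shortest (minimum-cost) path from the vertex set `X` to the vertex `v`
in the digraph with edge set `E`. -/
def IsShortestDipathFromSet {V : Type*} (E : Set (V × V)) (cost : V × V → ℝ)
    (X : Set V) (v : V) (p : List V) : Prop :=
  (∃ u ∈ X, IsDipath E u v p) ∧
    ∀ u ∈ X, ∀ q, IsDipath E u v q → pathCost cost p ≤ pathCost cost q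

/-- `A` is an arborescence rooted at `r` in the digraph with edge set `E`. -/
def IsArborescence {V : Type*} (E : Set (V × V)) (r : V) (A : Set (V × V)) : Prop :=
  A ⊆ E ∧
  (∀ v : V, ¬ Relation.TransGen (fun a b => (a, b) ∈ A) v v) ∧
  (∀ e ∈ A, e.2 ≠ r) ∧
  (∀ v : V, v ≠ r → ∃! e : V × V, e ∈ A ∧ e.2 = v) ∧
  (∀ v : V, Relation.ReflTransGen (fun a b => (a, b) ∈ A) r v)

/-- The cost of a set of edges: the sum of the costs of its elements. -/
noncomputable def edgeSetCost {V : Type*} (cost : V × V → ℝ) (A : Set (V × V)) : ℝ :=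
  ∑ᶠ e ∈ A, cost e

/-- `A` is a minimum-cost arborescence rooted at `r` in the digraph with edge set `E`. -/
def IsMinArborescence {V : Type*} (E : Set (V × V)) (cost : V × V → ℝ)
    (r : V) (A : Set (V × V)) : Prop :=
  IsArborescence E r A ∧
    ∀ B, IsArborescence E r B → edgeSetCost cost A ≤ edgeSetCost cost B

/-- Edge `ε` has color `i`: `i` is the least index of a path `ρ j` containing `ε`. -/
def HasColor {V : Type*} {m : ℕ} (ρ : Fin m → List V) (i : Fin m) (ε : V × V) : Prop :=
  ε ∈ pathEdges (ρ i) ∧ ∀ j : Fin m, j < i → ε ∉ pathEdges (ρ j)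

/-- Color `i` is charged to the ordered pair `(x, y)`: the path `ρ i` contains a subpath
from `x` to `y` (i.e. `x` occurs strictly before `y` on `ρ i`), some outgoing edge of `x`
has color `i` and some incoming edge of `y` has color `i`. -/
def Charged {V : Type*} {m : ℕ} (ρ : Fin m → List V) (i : Fin m) (x y : V) : Prop :=
  (∃ k l : ℕ, k < l ∧ (ρ i)[k]? = some x ∧ (ρ i)[l]? = some y) ∧
  (∃ a : V, HasColor ρ i (x, a)) ∧
  (∃ b : V, HasColor ρ i (b, y))

namespace Aux
variable {V : Type*}

lemma pathEdges_nil : pathEdges ([] : List V) = [] := rfl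
lemma pathEdges_single (a : V) : pathEdges [a] = [] := rfl
lemma pathEdges_cons_cons (a b : V) (l : List V) :
    pathEdges (a::b::l) = (a,b) :: pathEdges (b::l) := rfl

lemma pathCost_nil (cost : V × V → ℝ) : pathCost cost ([] : List V) = 0 := rfl
lemma pathCost_single (cost : V × V → ℝ) (a : V) : pathCost cost [a] = 0 := rfl
lemma pathCost_cons_cons (cost : V × V → ℝ) (a b : V) (l : List V) :
    pathCost cost (a::b::l) = cost (a,b) + pathCost cost (b::l) := by
  simp [pathCost, pathEdges_cons_cons]

lemma mem_pathEdges_iff {p : List V} {ε : V × V} :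
    ε ∈ pathEdges p ↔ ∃ i, p[i]? = some ε.1 ∧ p[i+1]? = some ε.2 := by
  induction p with
  | nil => simp [pathEdges_nil]
  | cons a t ih =>
    cases t with
    | nil => simp [pathEdges_single]
    | cons b l =>
      rw [pathEdges_cons_cons]
      simp only [List.mem_cons]
      constructor
      · rintro (h | h)
        · exact ⟨0, by simp [h], by simp [h]⟩
        · obtain ⟨i, h1, h2⟩ := ih.mp h
          exact ⟨i+1, by simpa using h1, by simpa using h2⟩
      · rintro ⟨i, h1, h2⟩
        cases i with
        | zero =>
          simp only [List.getElem?_cons_zero, Option.some_inj] at h1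
          simp only [List.getElem?_cons_succ, List.getElem?_cons_zero, Option.some_inj] at h2
          left; exact Prod.ext h1.symm h2.symm
        | succ i =>
          right
          exact ih.mpr ⟨i, by simpa using h1, by simpa using h2⟩

lemma chain'_iff_pathEdges {A : Set (V × V)} {p : List V} :
    p.Chain' (fun a b => (a, b) ∈ A) ↔ ∀ ε ∈ pathEdges p, ε ∈ A := by
  induction p with
  | nil => simp [pathEdges_nil]; exact List.isChain_nil
  | cons a t ih =>
    cases t with
    | nil => simp [pathEdges_single]; exact List.isChain_singleton _
    | cons b l =>
      simp only [List.Chain'] at ih ⊢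
      rw [pathEdges_cons_cons, List.isChain_cons_cons, ih]
      constructor
      · rintro ⟨h1, h2⟩ ε hε
        rcases List.mem_cons.mp hε with h | h
        · rwa [h]
        · exact h2 ε h
      · intro h
        exact ⟨h _ List.mem_cons_self, fun ε hε => h ε (List.mem_cons_of_mem _ hε)⟩

lemma out_edge_unique {p : List V} (hnd : p.Nodup) {x a b : V}
    (h1 : (x, a) ∈ pathEdges p) (h2 : (x, b) ∈ pathEdges p) : a = b := by
  obtain ⟨i, hi1, hi2⟩ := mem_pathEdges_iff.mp h1
  obtain ⟨j, hj1, hj2⟩ := mem_pathEdges_iff.mp h2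
  have hilt : i < p.length := (List.getElem?_eq_some_iff.mp hi1).1
  have : i = j := (List.getElem?_inj hilt hnd).mp (hi1.trans hj1.symm)
  subst this
  exact Option.some_inj.mp (hi2.symm.trans hj2)

lemma in_edge_unique {p : List V} (hnd : p.Nodup) {y a b : V}
    (h1 : (a, y) ∈ pathEdges p) (h2 : (b, y) ∈ pathEdges p) : a = b := by
  obtain ⟨i, hi1, hi2⟩ := mem_pathEdges_iff.mp h1
  obtain ⟨j, hj1, hj2⟩ := mem_pathEdges_iff.mp h2
  have hilt : i + 1 < p.length := (List.getElem?_eq_some_iff.mp hi2).1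
  have : i + 1 = j + 1 := (List.getElem?_inj hilt hnd).mp (hi2.trans hj2.symm)
  have hij : i = j := by omega
  subst hij
  exact Option.some_inj.mp (hi1.symm.trans hj1)

lemma two_le_length {p : List V} {u v : V} (hu : p.head? = some u)
    (hv : p.getLast? = some v) (huv : u ≠ v) : 2 ≤ p.length := by
  match p with
  | [] => simp at hu
  | [a] =>
    simp only [List.head?_cons, Option.some_inj] at hu
    simp only [List.getLast?_singleton, Option.some_inj] at hv
    exact absurd (hu.symm.trans hv) huv
  | a :: b :: l => simp

lemma exists_first_edge {p : List V} {u : V} (hu : p.head? = some u)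
    (h2 : 2 ≤ p.length) : ∃ c, (u, c) ∈ pathEdges p := by
  match p with
  | [] => simp at hu
  | [a] => simp at h2
  | a :: b :: l =>
    simp only [List.head?_cons, Option.some_inj] at hu
    exact ⟨b, by rw [pathEdges_cons_cons, ← hu]; exact List.mem_cons_self⟩

lemma exists_last_edge {p : List V} {v : V} (hv : p.getLast? = some v)
    (h2 : 2 ≤ p.length) : ∃ c, (c, v) ∈ pathEdges p := by
  have hlen : p.length - 2 < p.length := by omega
  refine ⟨p[p.length - 2], mem_pathEdges_iff.mpr ⟨p.length - 2, ?_, ?_⟩⟩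
  · exact List.getElem?_eq_getElem hlen
  · have : p.length - 2 + 1 = p.length - 1 := by omega
    rw [this, ← List.getLast?_eq_getElem?]
    exact hv

lemma head?_append' (l1 l2 : List V) : (l1 ++ l2).head? = l1.head?.or l2.head? := by
  cases l1 <;> simp

lemma getLast?_append' (l1 l2 : List V) (h : l2 ≠ []) :
    (l1 ++ l2).getLast? = l2.getLast? := by
  rw [List.getLast?_eq_getElem?, List.getLast?_eq_getElem?, List.length_append]
  have h2 : 1 ≤ l2.length := by
    cases l2 with | nil => simp at h | cons a t => simp
  rw [List.getElem?_append_right (by omega)]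
  congr 1
  omega

lemma pathCost_append (cost : V × V → ℝ) {l1 l2 : List V} {a b : V}
    (h1 : l1.getLast? = some a) (h2 : l2.head? = some b) :
    pathCost cost (l1 ++ l2) = pathCost cost l1 + cost (a, b) + pathCost cost l2 := by
  induction l1 with
  | nil => simp at h1
  | cons c t ih =>
    cases t with
    | nil =>
      simp only [List.getLast?_singleton, Option.some_inj] at h1
      subst h1
      cases l2 with
      | nil => simp at h2
      | cons d l =>
        simp only [List.head?_cons, Option.some_inj] at h2
        subst h2
        simp [pathCost_cons_cons, pathCost_single, pathCost_nil]
    | cons d t' =>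
      have h1' : (d :: t').getLast? = some a := by
        rw [List.getLast?_cons_cons] at h1; exact h1
      have := ih h1'
      simp only [List.cons_append] at *
      rw [pathCost_cons_cons, pathCost_cons_cons, this]
      ring

lemma pathCost_sandwich (cost : V × V → ℝ) (A B s q : List V)
    (hh : s.head? = q.head?) (hl : s.getLast? = q.getLast?) :
    pathCost cost (A ++ s ++ B) + pathCost cost q
      = pathCost cost (A ++ q ++ B) + pathCost cost s := by
  cases hs : s with
  | nil =>
    have : q = [] := by
      cases q with
      | nil => rfl
      | cons c t => rw [hs] at hh; simp at hh
    subst this; simp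
  | cons c t =>
  subst hs
  have hq : q ≠ [] := by
    cases q with
    | nil => simp at hh
    | cons d u => simp
  obtain ⟨sh, hsh⟩ : ∃ sh, (c :: t).head? = some sh := ⟨c, rfl⟩
  obtain ⟨sl, hsl⟩ : ∃ sl, (c :: t).getLast? = some sl :=
    ⟨(c :: t).getLast (by simp), List.getLast?_eq_getLast _⟩
  have hqh : q.head? = some sh := hh ▸ hsh
  have hql : q.getLast? = some sl := hl ▸ hsl
  -- core : for any nonempty s', q' with same endpoints
  have core : ∀ s' q' : List V, s'.head? = some sh → s'.getLast? = some sl →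
      q'.head? = some sh → q'.getLast? = some sl →
      pathCost cost (s' ++ B) + pathCost cost q' =
        pathCost cost (q' ++ B) + pathCost cost s' := by
    intro s' q' h1 h2 h3 h4
    cases hB : B with
    | nil => rw [List.append_nil, List.append_nil]; ring
    | cons d u =>
      rw [pathCost_append cost h2 (by simp : (d :: u).head? = some d),
        pathCost_append cost h4 (by simp : (d :: u).head? = some d)]
      ring
  cases hA : A with
  | nil =>
    simpa using core (c :: t) q hsh hsl hqh hql
  | cons d u =>
    obtain ⟨al, hal⟩ : ∃ al, (d :: u).getLast? = some al :=
      ⟨(d :: u).getLast (by simp), List.getLast?_eq_getLast _⟩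
    have hsB : ((c :: t) ++ B).head? = some sh := by
      rw [head?_append', hsh]; rfl
    have hqB : (q ++ B).head? = some sh := by
      rw [head?_append', hqh]
      cases q with | nil => simp at hqh | cons => rfl
    rw [List.append_assoc, List.append_assoc,
      pathCost_append cost hal hsB, pathCost_append cost hal hqB]
    have := core (c :: t) q hsh hsl hqh hql
    ring_nf
    ring_nf at this
    linarith

lemma pathCost_nonneg {cost : V × V → ℝ} {E' : Set (V × V)}
    (h0 : ∀ ε ∈ E', 0 ≤ cost ε) {p : List V}
    (hch : p.Chain' (fun a b => (a, b) ∈ E')) : 0 ≤ pathCost cost p := by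
  apply List.sum_nonneg
  intro c hc
  obtain ⟨ε, hε, rfl⟩ := List.mem_map.mp hc
  exact h0 ε (chain'_iff_pathEdges.mp hch ε hε)

lemma pathCost_suffix_le {cost : V × V → ℝ} {E' : Set (V × V)}
    (h0 : ∀ ε ∈ E', 0 ≤ cost ε) (l1 l2 : List V) (h2 : l2 ≠ [])
    (hch : (l1 ++ l2).Chain' (fun a b => (a, b) ∈ E')) :
    pathCost cost l2 ≤ pathCost cost (l1 ++ l2) := by
  obtain ⟨hc1, hc2, hj⟩ := List.isChain_append.mp hch
  obtain ⟨b, hb⟩ : ∃ b, l2.head? = some b := by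
    cases l2 with | nil => exact absurd rfl h2 | cons c t => exact ⟨c, rfl⟩
  cases hl1 : l1 with
  | nil => simp
  | cons d u =>
    obtain ⟨a, ha⟩ : ∃ a, (d :: u).getLast? = some a :=
      ⟨(d :: u).getLast (by simp), List.getLast?_eq_getLast _⟩
    rw [pathCost_append cost ha hb]
    rw [hl1] at hc1 hj
    have hC1 : 0 ≤ pathCost cost (d :: u) := pathCost_nonneg h0 hc1
    have hab : (a, b) ∈ E' := hj a ha b hb
    have := h0 _ hab
    linarith

lemma shortcut {cost : V × V → ℝ} {E' : Set (V × V)}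
    (h0 : ∀ ε ∈ E', 0 ≤ cost ε) :
    ∀ (n : ℕ) (p : List V), p.length ≤ n → p ≠ [] →
      p.Chain' (fun a b => (a, b) ∈ E') →
      ∃ q : List V, q.Nodup ∧ q.head? = p.head? ∧ q.getLast? = p.getLast? ∧
        q.Chain' (fun a b => (a, b) ∈ E') ∧
        pathCost cost q ≤ pathCost cost p ∧ ∀ z ∈ q, z ∈ p := by
  intro n
  induction n with
  | zero =>
    intro p hlen hne _
    cases p with
    | nil => exact absurd rfl hne
    | cons a t => simp at hlen
  | succ n ih =>
    intro p hlen hne hch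
    cases p with
    | nil => exact absurd rfl hne
    | cons a t =>
      by_cases hat : a ∈ t
      · obtain ⟨t1, t2, ht⟩ := List.append_of_mem hat
        subst ht
        have hsplit : a :: (t1 ++ a :: t2) = (a :: t1) ++ (a :: t2) := by simp
        have hch2 : ((a :: t1) ++ (a :: t2)).Chain' (fun a b => (a, b) ∈ E') := by
          rwa [← hsplit]
        have hchs : (a :: t2).Chain' (fun a b => (a, b) ∈ E') :=
          (List.isChain_append.mp hch2).2.1
        have hlen2 : (a :: t2).length ≤ n := by
          simp only [List.length_cons, List.length_append] at hlen ⊢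
          omega
        obtain ⟨q, hq1, hq2, hq3, hq4, hq5, hq6⟩ := ih (a :: t2) hlen2 (by simp) hchs
        refine ⟨q, hq1, ?_, ?_, hq4, ?_, ?_⟩
        · rw [hq2]; rfl
        · rw [hq3, hsplit, getLast?_append' _ _ (by simp)]
        · calc pathCost cost q ≤ pathCost cost (a :: t2) := hq5
            _ ≤ pathCost cost ((a :: t1) ++ (a :: t2)) :=
              pathCost_suffix_le h0 _ _ (by simp) hch2
            _ = pathCost cost (a :: (t1 ++ a :: t2)) := by rw [← hsplit]
        · intro z hz
          have := hq6 z hz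
          simp only [List.mem_cons, List.mem_append] at this ⊢
          tauto
      · cases t with
        | nil =>
          exact ⟨[a], by simp, rfl, rfl, List.isChain_singleton _, le_refl _, by simp⟩
        | cons b t' =>
          have hch' : (b :: t').Chain' (fun a b => (a, b) ∈ E') :=
            (List.isChain_cons_cons.mp hch).2
          have hab : (a, b) ∈ E' := (List.isChain_cons_cons.mp hch).1
          obtain ⟨q, hq1, hq2, hq3, hq4, hq5, hq6⟩ := ih (b :: t')
            (by simp only [List.length_cons] at hlen ⊢; omega) (by simp) hch'
          cases q with
          | nil => simp at hq2
          | cons c u =>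
            have hcb : c = b := by simpa using hq2
            subst hcb
            refine ⟨a :: c :: u, ?_, rfl, ?_, ?_, ?_, ?_⟩
            · refine List.nodup_cons.mpr ⟨fun hmem => hat ?_, hq1⟩
              exact hq6 a hmem
            · rw [List.getLast?_cons_cons, List.getLast?_cons_cons]
              exact hq3
            · exact List.isChain_cons_cons.mpr ⟨hab, hq4⟩
            · rw [pathCost_cons_cons, pathCost_cons_cons]
              linarith
            · intro z hz
              rcases List.mem_cons.mp hz with h | h
              · simp [h]
              · exact List.mem_cons_of_mem _ (hq6 z h)

variable {V : Type*}

lemma dipath_mono {E1 E2 : Set (V × V)} {x y : V} {p : List V}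
    (h : IsDipath E1 x y p) (hsub : ∀ ε ∈ pathEdges p, ε ∈ E2) :
    IsDipath E2 x y p :=
  ⟨h.1, h.2.1, h.2.2.1, chain'_iff_pathEdges.mpr hsub⟩

lemma dipath_edges_mem {E1 : Set (V × V)} {x y : V} {p : List V}
    (h : IsDipath E1 x y p) : ∀ ε ∈ pathEdges p, ε ∈ E1 :=
  chain'_iff_pathEdges.mp h.2.2.2

lemma exists_shortest [Fintype V] (E : Set (V × V)) (cost : V × V → ℝ) (x y : V)
    (hne : ∃ p, IsDipath E x y p) : ∃ p, IsShortestDipath E cost x y p := by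
  classical
  have hfin : {p : List V | IsDipath E x y p}.Finite := by
    apply (List.finite_length_le V (Fintype.card V)).subset
    intro p hp
    exact hp.1.length_le_card
  obtain ⟨p, hp, hmin⟩ := Set.exists_min_image _ (pathCost cost) hfin hne
  exact ⟨p, hp, fun q hq => hmin q hq⟩

lemma sub_shortest {E' : Set (V × V)} {cost : V × V → ℝ}
    (h0 : ∀ ε ∈ E', 0 ≤ cost ε)
    {p : List V} {u v x y : V} {k l : ℕ}
    (hp : IsDipath E' u v p)
    (hmin : ∀ q, IsDipath E' u v q → pathCost cost p ≤ pathCost cost q)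
    (hkl : k ≤ l) (hk : p[k]? = some x) (hl : p[l]? = some y) :
    ∃ s : List V, IsDipath E' x y s ∧
      (∀ q, IsDipath E' x y q → pathCost cost s ≤ pathCost cost q) ∧
      (∀ ε ∈ pathEdges s, ∃ t, k ≤ t ∧ t + 1 ≤ l ∧
        p[t]? = some ε.1 ∧ p[t+1]? = some ε.2) := by
  classical
  obtain ⟨hnd, hhead, hlast, hch⟩ := hp
  have hllen : l < p.length := (List.getElem?_eq_some_iff.mp hl).1
  set s : List V := (p.drop k).take (l + 1 - k) with hs
  -- decomposition
  have hdec : p = p.take k ++ s ++ p.drop (l + 1) := by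
    rw [List.append_assoc]
    have h1 : s ++ p.drop (l + 1) = p.drop k := by
      have h2 : p.drop (l+1) = (p.drop k).drop (l + 1 - k) := by
        rw [List.drop_drop]
        congr 1
        omega
      rw [h2, hs, List.take_append_drop]
    rw [h1, List.take_append_drop]
  have hslen : s.length = l + 1 - k := by
    rw [hs, List.length_take, List.length_drop]
    omega
  have hsidx : ∀ t : ℕ, t ≤ l - k → s[t]? = p[k + t]? := by
    intro t ht
    rw [hs, List.getElem?_take, if_pos (by omega), List.getElem?_drop]
  have hshead : s.head? = some x := by
    rw [List.head?_eq_getElem?, hsidx 0 (by omega)]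
    simpa using hk
  have hslast : s.getLast? = some y := by
    rw [List.getLast?_eq_getElem?, hslen]
    have : l + 1 - k - 1 = l - k := by omega
    rw [this, hsidx (l - k) le_rfl]
    have : k + (l - k) = l := by omega
    rw [this]; exact hl
  have hedges : ∀ ε ∈ pathEdges s, ∃ t, k ≤ t ∧ t + 1 ≤ l ∧
      p[t]? = some ε.1 ∧ p[t+1]? = some ε.2 := by
    intro ε hε
    obtain ⟨t', h1, h2⟩ := mem_pathEdges_iff.mp hε
    have ht'len : t' + 1 < s.length := (List.getElem?_eq_some_iff.mp h2).1
    have ht'l : t' + 1 ≤ l - k := by omega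
    refine ⟨k + t', by omega, by omega, ?_, ?_⟩
    · rw [← hsidx t' (by omega)]; exact h1
    · have : k + t' + 1 = k + (t' + 1) := by omega
      rw [this, ← hsidx (t' + 1) ht'l]; exact h2
  have hchain_s : s.Chain' (fun a b => (a, b) ∈ E') := by
    rw [chain'_iff_pathEdges]
    intro ε hε
    obtain ⟨t, _, _, h1, h2⟩ := hedges ε hε
    exact chain'_iff_pathEdges.mp hch ε (mem_pathEdges_iff.mpr ⟨t, h1, h2⟩)
  have hsnd : s.Nodup := by
    exact hnd.sublist ((List.take_sublist _ _).trans (List.drop_sublist _ _))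
  refine ⟨s, ⟨hsnd, hshead, hslast, hchain_s⟩, ?_, hedges⟩
  intro q hq
  obtain ⟨hqnd, hqh, hql, hqch⟩ := hq
  have hqne : q ≠ [] := by cases q with | nil => simp at hqh | cons => simp
  have hsne : s ≠ [] := by cases hs' : s with
    | nil => rw [hs'] at hshead; simp at hshead
    | cons => simp
  set w : List V := p.take k ++ q ++ p.drop (l+1) with hw
  have hdec' : p = p.take k ++ (s ++ p.drop (l + 1)) := by
    rw [← List.append_assoc]; exact hdec
  have hpch2 : (p.take k ++ (s ++ p.drop (l+1))).Chain' (fun a b => (a, b) ∈ E') := by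
    rw [← hdec']; exact hch
  obtain ⟨hc1, hcrest, hj1⟩ := List.isChain_append.mp hpch2
  obtain ⟨hc2, hc3, hj2⟩ := List.isChain_append.mp hcrest
  have hwch : w.Chain' (fun a b => (a, b) ∈ E') := by
    rw [hw, List.append_assoc]
    refine List.isChain_append.mpr ⟨hc1, List.isChain_append.mpr ⟨hqch, hc3, ?_⟩, ?_⟩
    · intro a ha b hb
      rw [hql] at ha
      simp only [Option.mem_def, Option.some_inj] at ha
      subst ha
      exact hj2 _ (by rw [hslast]; rfl) b hb
    · intro a ha b hb
      rw [head?_append', hqh] at hb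
      simp only [Option.some_or, Option.mem_def, Option.some_inj] at hb
      subst hb
      refine hj1 a ha _ ?_
      rw [head?_append', hshead]; rfl
  have hwhead : w.head? = some u := by
    rw [hw, List.append_assoc, head?_append', head?_append', hqh]
    conv_rhs => rw [← hhead, hdec', head?_append', head?_append', hshead]
  have hwlast : w.getLast? = some v := by
    cases hdrop : p.drop (l+1) with
    | nil =>
      rw [hw, hdrop, List.append_nil, getLast?_append' _ _ hqne, hql]
      rw [← hlast, hdec', hdrop, List.append_nil, getLast?_append' _ _ hsne, hslast]
    | cons d dd =>
      rw [hw, List.append_assoc, getLast?_append' _ _ (by rw [hdrop]; simp),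
        getLast?_append' _ _ (by rw [hdrop]; simp)]
      conv_rhs => rw [← hlast, hdec', getLast?_append' _ _ (by rw [hdrop]; simp),
        getLast?_append' _ _ (by rw [hdrop]; simp)]
  have hwne : w ≠ [] := by
    cases hw' : w with
    | nil => rw [hw'] at hwhead; simp at hwhead
    | cons => simp
  obtain ⟨q'', h1, h2, h3, h4, h5, h6⟩ := shortcut h0 w.length w le_rfl hwne hwch
  have hq''dip : IsDipath E' u v q'' := ⟨h1, by rw [h2, hwhead], by rw [h3, hwlast], h4⟩
  have hple : pathCost cost p ≤ pathCost cost w := le_trans (hmin q'' hq''dip) h5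
  have hsand := pathCost_sandwich cost (p.take k) (p.drop (l+1)) s q
    (by rw [hshead, hqh]) (by rw [hslast, hql])
  rw [← hdec] at hsand
  rw [← hw] at hsand
  linarith

lemma finale3 {ι : Type*} [DecidableEq ι] (s : Finset ι) (h3 : 3 ≤ s.card)
    (pos : ι → ℕ) (L F : ι → Prop)
    (hpair : ∀ a ∈ s, ∀ b ∈ s, pos a < pos b → L a ∨ F b)
    (hL : ∀ a ∈ s, ∀ b ∈ s, L a → L b → a = b)
    (hnoF : ∀ a ∈ s, ¬ F a)
    (hpos : ∀ a ∈ s, ∀ b ∈ s, pos a = pos b → a = b) : False := by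
  obtain ⟨a1, ha1, hmin1⟩ := Finset.exists_min_image s pos ⟨_,
    Finset.card_pos.mp (by omega) |>.choose_spec⟩
  have hcard1 : 2 ≤ (s.erase a1).card := by
    rw [Finset.card_erase_of_mem ha1]; omega
  obtain ⟨a2, ha2, hmin2⟩ := Finset.exists_min_image (s.erase a1) pos ⟨_,
    Finset.card_pos.mp (by omega) |>.choose_spec⟩
  have ha2s : a2 ∈ s := Finset.mem_of_mem_erase ha2
  have ha2ne : a2 ≠ a1 := Finset.ne_of_mem_erase ha2
  have hL1 : L a1 := by
    rcases hpair a1 ha1 a2 ha2s (lt_of_le_of_ne (hmin1 a2 ha2s)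
      (fun h => ha2ne (hpos a2 ha2s a1 ha1 h.symm))) with h | h
    · exact h
    · exact absurd h (hnoF a2 ha2s)
  have hcard2 : 1 ≤ ((s.erase a1).erase a2).card := by
    rw [Finset.card_erase_of_mem ha2]; omega
  obtain ⟨a3, ha3⟩ := Finset.card_pos.mp (by omega : 0 < ((s.erase a1).erase a2).card)
  have ha3e : a3 ∈ s.erase a1 := Finset.mem_of_mem_erase ha3
  have ha3s : a3 ∈ s := Finset.mem_of_mem_erase ha3e
  have ha3ne : a3 ≠ a2 := Finset.ne_of_mem_erase ha3
  have hL2 : L a2 := by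
    rcases hpair a2 ha2s a3 ha3s (lt_of_le_of_ne (hmin2 a3 ha3e)
      (fun h => ha3ne (hpos a3 ha3s a2 ha2s h.symm))) with h | h
    · exact h
    · exact absurd h (hnoF a3 ha3s)
  exact ha2ne (hL a2 ha2s a1 ha1 hL2 hL1)

lemma finale4 {ι : Type*} [DecidableEq ι] (s : Finset ι) (h4 : 4 ≤ s.card)
    (pos : ι → ℕ) (L F : ι → Prop)
    (hpair : ∀ a ∈ s, ∀ b ∈ s, pos a < pos b → L a ∨ F b)
    (hL : ∀ a ∈ s, ∀ b ∈ s, L a → L b → a = b)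
    (hF : ∀ a ∈ s, ∀ b ∈ s, F a → F b → a = b)
    (hpos : ∀ a ∈ s, ∀ b ∈ s, pos a = pos b → a = b) : False := by
  obtain ⟨a1, ha1, hmin1⟩ := Finset.exists_min_image s pos ⟨_,
    Finset.card_pos.mp (by omega) |>.choose_spec⟩
  by_cases hL1 : L a1
  · have hcard1 : 3 ≤ (s.erase a1).card := by
      rw [Finset.card_erase_of_mem ha1]; omega
    obtain ⟨a2, ha2, hmin2⟩ := Finset.exists_min_image (s.erase a1) pos ⟨_,
      Finset.card_pos.mp (by omega) |>.choose_spec⟩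
    have ha2s : a2 ∈ s := Finset.mem_of_mem_erase ha2
    have ha2ne : a2 ≠ a1 := Finset.ne_of_mem_erase ha2
    have hnL2 : ¬ L a2 := fun h => ha2ne (hL a2 ha2s a1 ha1 h hL1)
    have hallF : ∀ b ∈ (s.erase a1).erase a2, F b := by
      intro b hb
      have hbe : b ∈ s.erase a1 := Finset.mem_of_mem_erase hb
      have hbs : b ∈ s := Finset.mem_of_mem_erase hbe
      have hbne : b ≠ a2 := Finset.ne_of_mem_erase hb
      rcases hpair a2 ha2s b hbs (lt_of_le_of_ne (hmin2 b hbe)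
        (fun h => hbne (hpos b hbs a2 ha2s h.symm))) with h | h
      · exact absurd h hnL2
      · exact h
    have hcard2 : 2 ≤ ((s.erase a1).erase a2).card := by
      rw [Finset.card_erase_of_mem ha2]; omega
    obtain ⟨b1, hb1, b2, hb2, hne⟩ := Finset.one_lt_card.mp
      (show 1 < ((s.erase a1).erase a2).card by omega)
    have m1 := Finset.mem_of_mem_erase (Finset.mem_of_mem_erase hb1)
    have m2 := Finset.mem_of_mem_erase (Finset.mem_of_mem_erase hb2)
    exact hne (hF b1 m1 b2 m2 (hallF b1 hb1) (hallF b2 hb2))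
  · -- all others have F
    have hallF : ∀ b ∈ s.erase a1, F b := by
      intro b hb
      have hbs : b ∈ s := Finset.mem_of_mem_erase hb
      have hbne : b ≠ a1 := Finset.ne_of_mem_erase hb
      rcases hpair a1 ha1 b hbs (lt_of_le_of_ne (hmin1 b hbs)
        (fun h => hbne (hpos b hbs a1 ha1 h.symm))) with h | h
      · exact absurd h hL1
      · exact h
    have hcard1 : 2 ≤ (s.erase a1).card := by
      rw [Finset.card_erase_of_mem ha1]; omega
    obtain ⟨b1, hb1, b2, hb2, hne⟩ := Finset.one_lt_card.mp
      (show 1 < (s.erase a1).card by omega)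
    exact hne (hF b1 (Finset.mem_of_mem_erase hb1) b2 (Finset.mem_of_mem_erase hb2)
      (hallF b1 hb1) (hallF b2 hb2))

end Aux

open Aux

/-- in the setting of Algorithm 1, with `T` a min-cost arborescence,
`e i = (par i, vlab i)` the `T`-edge entering the `i`-th non-root vertex, and `ρ i` the
shortest path in `G − e i` from the component `X(v_i)` of `r` in `T − e i` to `vlab i`,
every ordered pair `(x, y)` of distinct vertices is charged by at most three colors. -/

theorem stmt2 {V : Type*} [Fintype V] [DecidableEq V]
    (E : Set (V × V)) (r : V) (cost : V × V → ℝ)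
    (hcost : ∀ e ∈ E, 0 ≤ cost e)
    (hroot : ∀ e ∈ E, e.2 ≠ r)
    (huniq : ∀ F ⊆ E, ∀ u v : V, ∀ p q : List V,
      IsShortestDipath (E \ F) cost u v p → IsShortestDipath (E \ F) cost u v q → p = q)
    (T : Set (V × V)) (hT : IsMinArborescence E cost r T)
    -- the labeling `v₁, …, v_{n−1}` of the non-root vertices
    (vlab : Fin (Fintype.card V - 1) → V)
    (hvinj : Function.Injective vlab)
    (hvrange : Set.range vlab = {v : V | v ≠ r})
    -- `e i = (par i, vlab i)` is the edge of `T` entering `vlab i`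
    (par : Fin (Fintype.card V - 1) → V)
    (hpar : ∀ i, (par i, vlab i) ∈ T)
    -- `ρ i` is the shortest path in `G − e i` from `X(v_i)` to `vlab i`
    (ρ : Fin (Fintype.card V - 1) → List V)
    (hρ : ∀ i, IsShortestDipathFromSet (E \ {(par i, vlab i)}) cost
      {u : V | Relation.ReflTransGen
        (fun a b => (a, b) ∈ T \ {(par i, vlab i)}) r u} (vlab i) (ρ i)) :
    ∀ x y : V, x ≠ y → {i : Fin (Fintype.card V - 1) | Charged ρ i x y}.ncard ≤ 3 := by
  classical
  have hTsub : T ⊆ E := hT.1.1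
  intro x y hxy
  by_contra hcon
  push_neg at hcon
  have h4 : 4 ≤ {i : Fin (Fintype.card V - 1) | Charged ρ i x y}.ncard := hcon
  obtain ⟨S4, hS4sub, hS4card⟩ := Set.exists_subset_card_eq h4
  have hS4fin : S4.Finite := Set.toFinite _
  set F4 : Finset (Fin (Fintype.card V - 1)) := hS4fin.toFinset with hF4
  have hF4card : F4.card = 4 := by
    rw [hF4, ← Set.ncard_eq_toFinset_card _ hS4fin]; exact hS4card
  have hF4S : ∀ i ∈ F4, Charged ρ i x y := fun i hi => hS4sub (hS4fin.mem_toFinset.mp hi)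
  have hTE : ∀ i, (par i, vlab i) ∈ E := fun i => hTsub (hpar i)
  have h0' : ∀ i : Fin (Fintype.card V - 1), ∀ ε ∈ E \ {(par i, vlab i)}, 0 ≤ cost ε :=
    fun i ε hε => hcost ε hε.1
  -- the bundle
  have key : ∀ i : Fin (Fintype.card V - 1), ∃ s : List V, ∃ fe le : V × V,
      Charged ρ i x y →
      IsDipath (E \ {(par i, vlab i)}) x y s ∧
      (∀ q, IsDipath (E \ {(par i, vlab i)}) x y q → pathCost cost s ≤ pathCost cost q) ∧
      (∀ ε ∈ pathEdges s, ε ∈ pathEdges (ρ i)) ∧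
      fe ∈ pathEdges s ∧ fe.1 = x ∧ (∀ j, j < i → fe ∉ pathEdges (ρ j)) ∧
      (∀ c, (x, c) ∈ pathEdges (ρ i) → (x, c) = fe) ∧
      le ∈ pathEdges s ∧ le.2 = y ∧ (∀ j, j < i → le ∉ pathEdges (ρ j)) ∧
      (∀ c, (c, y) ∈ pathEdges (ρ i) → (c, y) = le) := by
    intro i
    by_cases hci : Charged ρ i x y
    · obtain ⟨⟨k, l, hkl, hk, hl⟩, ⟨a, haρ, hacol⟩, ⟨b, hbρ, hbcol⟩⟩ := hci
      obtain ⟨⟨u0, hu0, hdip⟩, hminset⟩ := hρ i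
      have hρnd : (ρ i).Nodup := hdip.1
      obtain ⟨s, hs1, hs2, hs3'⟩ := sub_shortest (h0' i) hdip
        (fun q hq => hminset u0 hu0 q hq) hkl.le hk hl
      have hs3 : ∀ ε ∈ pathEdges s, ε ∈ pathEdges (ρ i) := by
        intro ε hε
        obtain ⟨t, _, _, h1, h2⟩ := hs3' ε hε
        exact mem_pathEdges_iff.mpr ⟨t, h1, h2⟩
      have hfuq : ∀ c, (x, c) ∈ pathEdges (ρ i) → (x, c) = (x, a) := by
        intro c hc
        rw [Prod.mk.injEq]
        exact ⟨rfl, out_edge_unique hρnd hc haρ⟩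
      have hluq : ∀ c, (c, y) ∈ pathEdges (ρ i) → (c, y) = (b, y) := by
        intro c hc
        rw [Prod.mk.injEq]
        exact ⟨in_edge_unique hρnd hc hbρ, rfl⟩
      have hslen2 : 2 ≤ s.length := two_le_length hs1.2.1 hs1.2.2.1 hxy
      obtain ⟨c0, hc0⟩ := exists_first_edge hs1.2.1 hslen2
      obtain ⟨d0, hd0⟩ := exists_last_edge hs1.2.2.1 hslen2
      have hfe_s : (x, a) ∈ pathEdges s := by
        have := hfuq c0 (hs3 _ hc0)
        rwa [this] at hc0
      have hle_s : (b, y) ∈ pathEdges s := by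
        have := hluq d0 (hs3 _ hd0)
        rwa [this] at hd0
      exact ⟨s, (x, a), (b, y), fun _ =>
        ⟨hs1, hs2, hs3, hfe_s, rfl, hacol, hfuq, hle_s, rfl, hbcol, hluq⟩⟩
    · exact ⟨[], (x, x), (y, y), fun h => absurd h hci⟩
  choose σ fe le hbund using key
  have B1 : ∀ i, Charged ρ i x y → IsDipath (E \ {(par i, vlab i)}) x y (σ i) :=
    fun i h => (hbund i h).1
  have B2 : ∀ i, Charged ρ i x y → ∀ q, IsDipath (E \ {(par i, vlab i)}) x y q →
      pathCost cost (σ i) ≤ pathCost cost q := fun i h => (hbund i h).2.1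
  have B3 : ∀ i, Charged ρ i x y → ∀ ε ∈ pathEdges (σ i), ε ∈ pathEdges (ρ i) :=
    fun i h => (hbund i h).2.2.1
  have B4 : ∀ i, Charged ρ i x y → fe i ∈ pathEdges (σ i) := fun i h => (hbund i h).2.2.2.1
  have B5 : ∀ i, Charged ρ i x y → (fe i).1 = x := fun i h => (hbund i h).2.2.2.2.1
  have B6 : ∀ i, Charged ρ i x y → ∀ j, j < i → fe i ∉ pathEdges (ρ j) :=
    fun i h => (hbund i h).2.2.2.2.2.1
  have B7 : ∀ i, Charged ρ i x y → ∀ c, (x, c) ∈ pathEdges (ρ i) → (x, c) = fe i :=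
    fun i h => (hbund i h).2.2.2.2.2.2.1
  have B8 : ∀ i, Charged ρ i x y → le i ∈ pathEdges (σ i) :=
    fun i h => (hbund i h).2.2.2.2.2.2.2.1
  have B9 : ∀ i, Charged ρ i x y → (le i).2 = y := fun i h => (hbund i h).2.2.2.2.2.2.2.2.1
  have B10 : ∀ i, Charged ρ i x y → ∀ j, j < i → le i ∉ pathEdges (ρ j) :=
    fun i h => (hbund i h).2.2.2.2.2.2.2.2.2.1
  have B11 : ∀ i, Charged ρ i x y → ∀ c, (c, y) ∈ pathEdges (ρ i) → (c, y) = le i :=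
    fun i h => (hbund i h).2.2.2.2.2.2.2.2.2.2
  -- uniqueness instances
  have huniqE : ∀ u' v' : V, ∀ p q : List V, IsShortestDipath E cost u' v' p →
      IsShortestDipath E cost u' v' q → p = q := by
    intro u' v' p q hp hq
    have := huniq ∅ (Set.empty_subset E) u' v' p q
    rw [Set.diff_empty] at this
    exact this hp hq
  have huniq1 : ∀ i : Fin (Fintype.card V - 1), ∀ u' v' : V, ∀ p q : List V,
      IsShortestDipath (E \ {(par i, vlab i)}) cost u' v' p →
      IsShortestDipath (E \ {(par i, vlab i)}) cost u' v' q → p = q :=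
    fun i u' v' p q hp hq =>
      huniq {(par i, vlab i)} (Set.singleton_subset_iff.mpr (hTE i)) u' v' p q hp hq
  -- a shortest x-y path P in G
  have hF4ne : ∃ i, i ∈ F4 := by
    obtain ⟨i, hi⟩ := Finset.card_pos.mp (by omega : 0 < F4.card)
    exact ⟨i, hi⟩
  obtain ⟨i0, hi0⟩ := hF4ne
  have hc0 := hF4S i0 hi0
  have hPex : ∃ p, IsDipath E x y p :=
    ⟨σ i0, dipath_mono (B1 i0 hc0) (fun ε hε => (dipath_edges_mem (B1 i0 hc0) ε hε).1)⟩
  obtain ⟨P, hPdi, hPmin⟩ := exists_shortest E cost x y hPex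
  have hPnd : P.Nodup := hPdi.1
  have hP2 : 2 ≤ P.length := two_le_length hPdi.2.1 hPdi.2.2.1 hxy
  obtain ⟨cP, hcP⟩ := exists_first_edge hPdi.2.1 hP2
  obtain ⟨dP, hdP⟩ := exists_last_edge hPdi.2.2.1 hP2
  have hfePuniq : ∀ c, (x, c) ∈ pathEdges P → (x, c) = (x, cP) := by
    intro c hc
    rw [Prod.mk.injEq]
    exact ⟨rfl, out_edge_unique hPnd hc hcP⟩
  have hlePuniq : ∀ c, (c, y) ∈ pathEdges P → (c, y) = (dP, y) := by
    intro c hc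
    rw [Prod.mk.injEq]
    exact ⟨in_edge_unique hPnd hc hdP, rfl⟩
  -- pairwise lemma
  have pair : ∀ i, Charged ρ i x y → ∀ j, Charged ρ j x y → i ≠ j →
      (par i, vlab i) ∈ pathEdges (σ j) ∨ (par j, vlab j) ∈ pathEdges (σ i) := by
    intro i hci j hcj hij
    by_contra hno
    push_neg at hno
    obtain ⟨hnoi, hnoj⟩ := hno
    have hdj' : IsDipath (E \ {(par i, vlab i)}) x y (σ j) :=
      dipath_mono (B1 j hcj) (fun ε hε =>
        ⟨(dipath_edges_mem (B1 j hcj) ε hε).1, fun heq => hnoi (heq ▸ hε)⟩)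
    have hdi' : IsDipath (E \ {(par j, vlab j)}) x y (σ i) :=
      dipath_mono (B1 i hci) (fun ε hε =>
        ⟨(dipath_edges_mem (B1 i hci) ε hε).1, fun heq => hnoj (heq ▸ hε)⟩)
    have hle1 : pathCost cost (σ i) ≤ pathCost cost (σ j) := B2 i hci _ hdj'
    have hle2 : pathCost cost (σ j) ≤ pathCost cost (σ i) := B2 j hcj _ hdi'
    have heq : σ i = σ j := huniq1 i x y (σ i) (σ j) ⟨B1 i hci, B2 i hci⟩
      ⟨hdj', fun q hq => le_trans hle2 (B2 i hci q hq)⟩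
    rcases lt_or_gt_of_ne hij with h | h
    · refine B6 j hcj i h ?_
      refine B3 i hci _ ?_
      rw [heq]
      exact B4 j hcj
    · refine B6 i hci j h ?_
      refine B3 j hcj _ ?_
      rw [← heq]
      exact B4 i hci
  -- dichotomy
  have dich : ∀ i, Charged ρ i x y → σ i = P ∨ (par i, vlab i) ∈ pathEdges P := by
    intro i hci
    by_cases hB : (par i, vlab i) ∈ pathEdges P
    · exact Or.inr hB
    refine Or.inl ?_
    have hP' : IsDipath (E \ {(par i, vlab i)}) x y P :=
      dipath_mono hPdi (fun ε hε =>
        ⟨dipath_edges_mem hPdi ε hε, fun heq => hB (heq ▸ hε)⟩)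
    have h2 : pathCost cost P ≤ pathCost cost (σ i) :=
      hPmin _ (dipath_mono (B1 i hci) (fun ε hε => (dipath_edges_mem (B1 i hci) ε hε).1))
    exact huniq1 i x y (σ i) P ⟨B1 i hci, B2 i hci⟩
      ⟨hP', fun q hq => le_trans h2 (B2 i hci q hq)⟩
  -- first/last colored edges are pairwise distinct among charged indices
  have hFun : ∀ i, Charged ρ i x y → ∀ j, Charged ρ j x y → i ≠ j → fe i = fe j → False := by
    intro i hci j hcj hij hfe
    rcases lt_or_gt_of_ne hij with h | h
    · exact B6 j hcj i h (hfe ▸ B3 i hci _ (B4 i hci))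
    · exact B6 i hci j h (hfe ▸ B3 j hcj _ (B4 j hcj))
  have hLun : ∀ i, Charged ρ i x y → ∀ j, Charged ρ j x y → i ≠ j → le i = le j → False := by
    intro i hci j hcj hij hle
    rcases lt_or_gt_of_ne hij with h | h
    · exact B10 j hcj i h (hle ▸ B3 i hci _ (B8 i hci))
    · exact B10 i hci j h (hle ▸ B3 j hcj _ (B8 j hcj))
  -- positions of tree edges on P
  have hposex : ∀ i : Fin (Fintype.card V - 1), ∃ n : ℕ,
      (par i, vlab i) ∈ pathEdges P → (P[n]? = some (par i) ∧ P[n+1]? = some (vlab i)) := by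
    intro i
    by_cases h : (par i, vlab i) ∈ pathEdges P
    · obtain ⟨n, h1, h2⟩ := mem_pathEdges_iff.mp h
      exact ⟨n, fun _ => ⟨h1, h2⟩⟩
    · exact ⟨0, fun hh => absurd hh h⟩
  choose pos hposp using hposex
  have hposuniq : ∀ i, (par i, vlab i) ∈ pathEdges P →
      ∀ t, P[t]? = some (par i) → t = pos i := by
    intro i hB t ht
    exact (List.getElem?_inj (List.getElem?_eq_some_iff.mp ht).1 hPnd).mp
      (ht.trans ((hposp i hB).1).symm)
  have hposinjB : ∀ i, (par i, vlab i) ∈ pathEdges P → ∀ j, (par j, vlab j) ∈ pathEdges P →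
      pos i = pos j → i = j := by
    intro i hBi j hBj hp
    have h1 := (hposp i hBi).2
    have h2 := (hposp j hBj).2
    rw [hp] at h1
    exact hvinj (Option.some_inj.mp (h1.symm.trans h2))
  -- key pair lemma
  have kp : ∀ i, Charged ρ i x y → ∀ j, Charged ρ j x y →
      (par i, vlab i) ∈ pathEdges P → (par j, vlab j) ∈ pathEdges P →
      pos i < pos j → le i = (dP, y) ∨ fe j = (x, cP) := by
    intro i hci j hcj hBi hBj hpos
    have hij : i ≠ j := fun h => by rw [h] at hpos; exact lt_irrefl _ hpos
    rcases pair i hci j hcj hij with hmem | hmem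
    · -- (par i, vlab i) ∈ σ j  ⇒  fe j = (x, cP)
      refine Or.inr ?_
      obtain ⟨n, hn1, hn2⟩ := mem_pathEdges_iff.mp hmem
      -- prefix of σ j up to vlab i
      have hσj0 : (σ j)[0]? = some x := by
        rw [← List.head?_eq_getElem?]; exact (B1 j hcj).2.1
      obtain ⟨s1, hs1di, hs1min, hs1e⟩ := sub_shortest (h0' j) (B1 j hcj) (B2 j hcj)
        (Nat.zero_le (n+1)) hσj0 hn2
      -- prefix of P up to vlab i
      have hPpos : P[pos i + 1]? = some (vlab i) := (hposp i hBi).2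
      have hP0 : P[0]? = some x := by
        rw [← List.head?_eq_getElem?]; exact hPdi.2.1
      obtain ⟨s2, hs2di, hs2min, hs2e⟩ := sub_shortest hcost hPdi hPmin
        (Nat.zero_le (pos i + 1)) hP0 hPpos
      -- s2 avoids (par j, vlab j)
      have hs2avoid : ∀ ε ∈ pathEdges s2, ε ≠ (par j, vlab j) := by
        intro ε hε heq
        obtain ⟨t, ht0, ht1, hq1, hq2⟩ := hs2e ε hε
        rw [heq] at hq1
        have := hposuniq j hBj t hq1
        omega
      have hs2di' : IsDipath (E \ {(par j, vlab j)}) x (vlab i) s2 :=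
        dipath_mono hs2di (fun ε hε => ⟨dipath_edges_mem hs2di ε hε, hs2avoid ε hε⟩)
      have hc1 : pathCost cost s1 ≤ pathCost cost s2 := hs1min _ hs2di'
      have hc2 : pathCost cost s2 ≤ pathCost cost s1 :=
        hs2min _ (dipath_mono hs1di (fun ε hε => (dipath_edges_mem hs1di ε hε).1))
      have heq12 : s1 = s2 := huniq1 j x (vlab i) s1 s2 ⟨hs1di, hs1min⟩
        ⟨hs2di', fun q hq => le_trans hc2 (hs1min q hq)⟩
      -- x ≠ vlab i
      have hxvi : x ≠ vlab i := by
        intro h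
        have h1 : (σ j)[0]? = some (vlab i) := by rw [← h]; exact hσj0
        have := (List.getElem?_inj (List.getElem?_eq_some_iff.mp h1).1 (B1 j hcj).1).mp
          (h1.trans hn2.symm)
        omega
      have hs1len : 2 ≤ s1.length := two_le_length hs1di.2.1 hs1di.2.2.1 hxvi
      obtain ⟨c1, hc1e⟩ := exists_first_edge hs1di.2.1 hs1len
      -- (x, c1) ∈ edges σ j hence = fe j ; and ∈ edges P hence = (x, cP)
      have hmem1 : (x, c1) ∈ pathEdges (σ j) := by
        obtain ⟨t, _, _, h1, h2⟩ := hs1e _ hc1e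
        exact mem_pathEdges_iff.mpr ⟨t, h1, h2⟩
      have hmem2 : (x, c1) ∈ pathEdges P := by
        have : (x, c1) ∈ pathEdges s2 := heq12 ▸ hc1e
        obtain ⟨t, _, _, h1, h2⟩ := hs2e _ this
        exact mem_pathEdges_iff.mpr ⟨t, h1, h2⟩
      have e1 : (x, c1) = fe j := B7 j hcj c1 (B3 j hcj _ hmem1)
      have e2 : (x, c1) = (x, cP) := hfePuniq c1 hmem2
      rw [← e1, e2]
    · -- (par j, vlab j) ∈ σ i ⇒ le i = (dP, y)
      refine Or.inl ?_
      by_cases hvy : vlab j = y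
      · -- the edge into y itself
        have h1 : (par j, y) ∈ pathEdges (ρ i) := by
          rw [← hvy]; exact B3 i hci _ hmem
        have h2 : (par j, y) ∈ pathEdges P := by rw [← hvy]; exact hBj
        rw [← B11 i hci _ h1]
        exact hlePuniq _ h2
      · obtain ⟨n, hn1, hn2⟩ := mem_pathEdges_iff.mp hmem
        have hσilast : (σ i)[(σ i).length - 1]? = some y := by
          rw [← List.getLast?_eq_getElem?]; exact (B1 i hci).2.2.1
        have hn2len : n + 1 < (σ i).length := (List.getElem?_eq_some_iff.mp hn2).1
        obtain ⟨s1, hs1di, hs1min, hs1e⟩ := sub_shortest (h0' i) (B1 i hci) (B2 i hci)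
          (by omega : n + 1 ≤ (σ i).length - 1) hn2 hσilast
        have hPlast : P[P.length - 1]? = some y := by
          rw [← List.getLast?_eq_getElem?]; exact hPdi.2.2.1
        have hPposlen : pos j + 1 < P.length :=
          (List.getElem?_eq_some_iff.mp (hposp j hBj).2).1
        obtain ⟨s2, hs2di, hs2min, hs2e⟩ := sub_shortest hcost hPdi hPmin
          (by omega : pos j + 1 ≤ P.length - 1) (hposp j hBj).2 hPlast
        have hs2avoid : ∀ ε ∈ pathEdges s2, ε ≠ (par i, vlab i) := by
          intro ε hε heq
          obtain ⟨t, ht0, ht1, hq1, hq2⟩ := hs2e ε hε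
          rw [heq] at hq1
          have := hposuniq i hBi t hq1
          omega
        have hs2di' : IsDipath (E \ {(par i, vlab i)}) (vlab j) y s2 :=
          dipath_mono hs2di (fun ε hε => ⟨dipath_edges_mem hs2di ε hε, hs2avoid ε hε⟩)
        have hc1 : pathCost cost s1 ≤ pathCost cost s2 := hs1min _ hs2di'
        have hc2 : pathCost cost s2 ≤ pathCost cost s1 :=
          hs2min _ (dipath_mono hs1di (fun ε hε => (dipath_edges_mem hs1di ε hε).1))
        have heq12 : s1 = s2 := huniq1 i (vlab j) y s1 s2 ⟨hs1di, hs1min⟩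
          ⟨hs2di', fun q hq => le_trans hc2 (hs1min q hq)⟩
        have hs1len : 2 ≤ s1.length := two_le_length hs1di.2.1 hs1di.2.2.1 hvy
        obtain ⟨d1, hd1e⟩ := exists_last_edge hs1di.2.2.1 hs1len
        have hmem1 : (d1, y) ∈ pathEdges (σ i) := by
          obtain ⟨t, _, _, h1, h2⟩ := hs1e _ hd1e
          exact mem_pathEdges_iff.mpr ⟨t, h1, h2⟩
        have hmem2 : (d1, y) ∈ pathEdges P := by
          have : (d1, y) ∈ pathEdges s2 := heq12 ▸ hd1e
          obtain ⟨t, _, _, h1, h2⟩ := hs2e _ this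
          exact mem_pathEdges_iff.mpr ⟨t, h1, h2⟩
        have e1 : (d1, y) = le i := B11 i hci d1 (B3 i hci _ hmem1)
        have e2 : (d1, y) = (dP, y) := hlePuniq d1 hmem2
        rw [← e1, e2]
  -- assemble the contradiction
  set Bp : Fin (Fintype.card V - 1) → Prop :=
    fun i => (par i, vlab i) ∈ pathEdges P with hBp
  set sB := F4.filter (fun i => Bp i) with hsB
  set sA := F4.filter (fun i => ¬ Bp i) with hsA
  have hsBmem : ∀ i ∈ sB, Charged ρ i x y ∧ Bp i := by
    intro i hi
    obtain ⟨h1, h2⟩ := Finset.mem_filter.mp hi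
    exact ⟨hF4S i h1, h2⟩
  have hsAprop : ∀ i ∈ sA, Charged ρ i x y ∧ fe i = (x, cP) ∧ le i = (dP, y) := by
    intro i hi
    obtain ⟨h1, h2⟩ := Finset.mem_filter.mp hi
    have hci := hF4S i h1
    have hσP : σ i = P := by
      rcases dich i hci with h | h
      · exact h
      · exact absurd h h2
    have hfe1 : fe i ∈ pathEdges P := by rw [← hσP]; exact B4 i hci
    have hle1 : le i ∈ pathEdges P := by rw [← hσP]; exact B8 i hci
    have hfe2 : fe i = (x, (fe i).2) := by
      rw [Prod.mk.injEq]; exact ⟨B5 i hci, rfl⟩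
    have hle2 : le i = ((le i).1, y) := by
      rw [Prod.mk.injEq]; exact ⟨rfl, B9 i hci⟩
    refine ⟨hci, ?_, ?_⟩
    · rw [hfe2]; exact hfePuniq _ (hfe2 ▸ hfe1)
    · rw [hle2]; exact hlePuniq _ (hle2 ▸ hle1)
  have hsAcard : sA.card ≤ 1 := by
    by_contra hc
    push_neg at hc
    obtain ⟨a, ha, b, hb, hab⟩ := Finset.one_lt_card.mp hc
    obtain ⟨hca, hfa, _⟩ := hsAprop a ha
    obtain ⟨hcb, hfb, _⟩ := hsAprop b hb
    exact hFun a hca b hcb hab (hfa.trans hfb.symm)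
  have hsplit : sB.card + sA.card = F4.card := by
    simpa using Finset.card_filter_add_card_filter_not
      (s := F4) (p := fun i => Bp i)
  have hsBcard : 3 ≤ sB.card := by
    rw [hF4card] at hsplit
    omega
  by_cases hA : sA.Nonempty
  · obtain ⟨z, hz⟩ := hA
    obtain ⟨hcz, hfz, _⟩ := hsAprop z hz
    refine finale3 sB hsBcard pos (fun i => le i = (dP, y)) (fun i => fe i = (x, cP))
      ?_ ?_ ?_ ?_
    · intro a ha b hb hlt
      obtain ⟨hca, hBa⟩ := hsBmem a ha
      obtain ⟨hcb, hBb⟩ := hsBmem b hb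
      exact kp a hca b hcb hBa hBb hlt
    · intro a ha b hb hLa hLb
      by_contra hne
      obtain ⟨hca, _⟩ := hsBmem a ha
      obtain ⟨hcb, _⟩ := hsBmem b hb
      exact hLun a hca b hcb hne (hLa.trans hLb.symm)
    · intro a ha hFa
      obtain ⟨hca, hBa⟩ := hsBmem a ha
      have haz : a ≠ z := by
        intro h
        have : ¬ Bp z := (Finset.mem_filter.mp hz).2
        exact this (h ▸ hBa)
      exact hFun a hca z hcz haz (hFa.trans hfz.symm)
    · intro a ha b hb hp
      obtain ⟨hca, hBa⟩ := hsBmem a ha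
      obtain ⟨hcb, hBb⟩ := hsBmem b hb
      exact hposinjB a hBa b hBb hp
  · have hsA0 : sA.card = 0 := by
      rw [Finset.card_eq_zero]
      exact Finset.not_nonempty_iff_eq_empty.mp hA
    have hsB4 : 4 ≤ sB.card := by
      rw [hF4card] at hsplit
      omega
    refine finale4 sB hsB4 pos (fun i => le i = (dP, y)) (fun i => fe i = (x, cP))
      ?_ ?_ ?_ ?_
    · intro a ha b hb hlt
      obtain ⟨hca, hBa⟩ := hsBmem a ha
      obtain ⟨hcb, hBb⟩ := hsBmem b hb
      exact kp a hca b hcb hBa hBb hlt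
    · intro a ha b hb hLa hLb
      by_contra hne
      obtain ⟨hca, _⟩ := hsBmem a ha
      obtain ⟨hcb, _⟩ := hsBmem b hb
      exact hLun a hca b hcb hne (hLa.trans hLb.symm)
    · intro a ha b hb hFa hFb
      by_contra hne
      obtain ⟨hca, _⟩ := hsBmem a ha
      obtain ⟨hcb, _⟩ := hsBmem b hb
      exact hFun a hca b hcb hne (hFa.trans hFb.symm)
    · intro a ha b hb hp
      obtain ⟨hca, hBa⟩ := hsBmem a ha
      obtain ⟨hcb, hBb⟩ := hsBmem b hb
      exact hposinjB a hBa b hBb hp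
end

section
/- Let x and y be vertices of G and let e_i and e_j be edges of G. Suppose q_i is the unique shortest path from x to y in G − e_i and q_j is the unique shortest path from x to y in G − e_j. If q_i ≠ q_j, then e_i lies on q_j or e_j lies on q_i. -/
lemma chain'_iff_pathEdges {V : Type*} (A : Set (V × V)) (p : List V) :
    p.Chain' (fun a b => (a, b) ∈ A) ↔ ∀ e ∈ p.zip p.tail, e ∈ A := by
  induction p with
  | nil => simp [List.Chain', List.isChain_nil]
  | cons a t ih =>
    cases t with
    | nil => simp [List.Chain', List.isChain_singleton]
    | cons b t' =>
      simp only [List.Chain'] at ih ⊢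
      simp only [List.isChain_cons_cons, List.tail_cons, List.zip_cons_cons, List.mem_cons, ih]
      constructor
      · rintro ⟨h1, h2⟩ e (rfl | he)
        · exact h1
        · exact h2 e he
      · intro h
        exact ⟨h _ (Or.inl rfl), fun e he => h e (Or.inr he)⟩

/-- If `p` is a dipath avoiding `ea` and also misses edge `eb`, it is a dipath avoiding `eb`. -/
lemma dipath_switch {V : Type*} (E : Set (V × V)) (u v : V) (p : List V) (ea eb : V × V)
    (hp : IsDipath (E \ {ea}) u v p) (hmiss : eb ∉ pathEdges p) :
    IsDipath (E \ {eb}) u v p := by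
  obtain ⟨h1, h2, h3, h4⟩ := hp
  refine ⟨h1, h2, h3, ?_⟩
  rw [chain'_iff_pathEdges] at h4 ⊢
  intro e he
  have := h4 e he
  refine ⟨this.1, ?_⟩
  rintro rfl
  exact hmiss he

/-- if `qi` is the unique shortest path from `x` to `y` in `G − ei` and
`qj` is the unique shortest path from `x` to `y` in `G − ej`, and `qi ≠ qj`, then
`ei` lies on `qj` or `ej` lies on `qi`. -/
theorem stmt5 {V : Type*} [Fintype V] [DecidableEq V]
    (E : Set (V × V)) (cost : V × V → ℝ)
    (hcost : ∀ e ∈ E, 0 ≤ cost e)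
    (huniq : ∀ F ⊆ E, ∀ u v : V, ∀ p q : List V,
      IsShortestDipath (E \ F) cost u v p → IsShortestDipath (E \ F) cost u v q → p = q)
    (x y : V) (ei ej : V × V) (hei : ei ∈ E) (hej : ej ∈ E)
    (qi qj : List V)
    (hqi : IsShortestDipath (E \ {ei}) cost x y qi)
    (hqj : IsShortestDipath (E \ {ej}) cost x y qj)
    (hne : qi ≠ qj) :
    ei ∈ pathEdges qj ∨ ej ∈ pathEdges qi := by
  by_contra h
  push_neg at h
  obtain ⟨hij, hji⟩ := h
  -- qj is a dipath in E \ {ei}, qi is a dipath in E \ {ej}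
  have hqj' : IsDipath (E \ {ei}) x y qj := dipath_switch E x y qj ej ei hqj.1 hij
  have hqi' : IsDipath (E \ {ej}) x y qi := dipath_switch E x y qi ei ej hqi.1 hji
  have hle1 : pathCost cost qi ≤ pathCost cost qj := hqi.2 qj hqj'
  have hle2 : pathCost cost qj ≤ pathCost cost qi := hqj.2 qi hqi'
  have hqjshort : IsShortestDipath (E \ {ei}) cost x y qj := by
    refine ⟨hqj', fun q hq => ?_⟩
    exact le_trans hle2 (hqi.2 q hq)
  exact hne (huniq {ei} (Set.singleton_subset_iff.mpr hei) x y qi qj hqi hqjshort)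
end

section
/- Let x and y be vertices of G such that the unique shortest path SP(x,y) from x to y in G exists. Let e_i and e_j be edges of G, let p be the unique shortest path from x to y in G − e_i, and let q be the unique shortest path from x to y in G − e_j. If both p and q are edge-disjoint from SP(x,y), then p = q. -/
lemma chain'_iff_zip {V : Type*} {R : V → V → Prop} :
    ∀ {l : List V}, l.Chain' R ↔ ∀ ε ∈ l.zip l.tail, R ε.1 ε.2
  | [] => by simp [List.Chain']
  | [a] => by simp [List.Chain']
  | a :: b :: t => by
      simp only [List.Chain']; rw [List.isChain_cons_cons]
      have ih := @chain'_iff_zip V R (b :: t)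
      constructor
      · rintro ⟨hab, h⟩ ε hε
        simp only [List.tail_cons, List.zip_cons_cons, List.mem_cons] at hε
        rcases hε with rfl | hε
        · exact hab
        · exact ih.mp h ε (by simpa using hε)
      · intro h
        refine ⟨h (a, b) (by simp), ih.mpr ?_⟩
        intro ε hε
        refine h ε ?_
        simp only [List.tail_cons, List.zip_cons_cons, List.mem_cons]
        right
        simpa using hε

lemma dipath_edges_mem {V : Type*} {E : Set (V × V)} {u v : V} {p : List V}
    (h : IsDipath E u v p) : ∀ ε ∈ pathEdges p, ε ∈ E := by
  intro ε hε
  have := chain'_iff_zip.mp h.2.2.2 ε hε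
  simpa using this

lemma dipath_mono {V : Type*} {E E' : Set (V × V)} {u v : V} {p : List V}
    (hEE : E ⊆ E') (h : IsDipath E u v p) : IsDipath E' u v p :=
  ⟨h.1, h.2.1, h.2.2.1, h.2.2.2.imp fun _ _ hab => hEE hab⟩

/-- If `e` is not an edge of the shortest path `sp`, then the unique shortest path
in `E \ {e}` coincides with `sp`. -/
lemma eq_sp_of_not_mem {V : Type*} (E : Set (V × V)) (cost : V × V → ℝ)
    (huniq : ∀ F ⊆ E, ∀ u v : V, ∀ p q : List V,
      IsShortestDipath (E \ F) cost u v p → IsShortestDipath (E \ F) cost u v q → p = q)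
    (x y : V) (e : V × V) (he : e ∈ E)
    (sp : List V) (hsp : IsShortestDipath E cost x y sp)
    (p : List V) (hp : IsShortestDipath (E \ {e}) cost x y p)
    (hne : e ∉ pathEdges sp) : p = sp := by
  have hspdi : IsDipath (E \ {e}) x y sp := by
    refine ⟨hsp.1.1, hsp.1.2.1, hsp.1.2.2.1, chain'_iff_zip.mpr ?_⟩
    intro ε hε
    have hεE : ε ∈ E := dipath_edges_mem hsp.1 ε hε
    have hεne : (ε.1, ε.2) ≠ e := by
      rintro h
      exact hne (h ▸ (by simpa [pathEdges] using hε))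
    exact ⟨hεE, by simpa using hεne⟩
  have hspsh : IsShortestDipath (E \ {e}) cost x y sp := by
    refine ⟨hspdi, fun r hr => hsp.2 r (dipath_mono Set.diff_subset hr)⟩
  exact huniq {e} (by simpa using he) x y p sp hp hspsh

/-- let `sp` be the unique shortest path from `x` to `y` in `G`, let `p` be
the unique shortest path from `x` to `y` in `G − ei` and `q` the unique shortest path from
`x` to `y` in `G − ej`.  If both `p` and `q` are edge-disjoint from `sp`, then `p = q`. -/
theorem stmt6 {V : Type*} [Fintype V] [DecidableEq V]
    (E : Set (V × V)) (cost : V × V → ℝ)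
    (hcost : ∀ e ∈ E, 0 ≤ cost e)
    (huniq : ∀ F ⊆ E, ∀ u v : V, ∀ p q : List V,
      IsShortestDipath (E \ F) cost u v p → IsShortestDipath (E \ F) cost u v q → p = q)
    (x y : V) (ei ej : V × V) (hei : ei ∈ E) (hej : ej ∈ E)
    (sp : List V) (hsp : IsShortestDipath E cost x y sp)
    (p q : List V)
    (hp : IsShortestDipath (E \ {ei}) cost x y p)
    (hq : IsShortestDipath (E \ {ej}) cost x y q)
    (hpdisj : ∀ ε ∈ pathEdges p, ε ∉ pathEdges sp)
    (hqdisj : ∀ ε ∈ pathEdges q, ε ∉ pathEdges sp) :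
    p = q := by
  by_cases hi : ei ∈ pathEdges sp
  · by_cases hj : ej ∈ pathEdges sp
    · -- both removed edges lie on sp: p and q are shortest in E \ S
      set S : Set (V × V) := {ε | ε ∈ pathEdges sp} with hS
      have hSE : S ⊆ E := fun ε hε => dipath_edges_mem hsp.1 ε hε
      have key : ∀ (e : V × V), e ∈ S →
          ∀ r : List V, IsShortestDipath (E \ {e}) cost x y r →
          (∀ ε ∈ pathEdges r, ε ∉ pathEdges sp) →
          IsShortestDipath (E \ S) cost x y r := by
        intro e heS r hr hrdisj
        have hrdi : IsDipath (E \ S) x y r := by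
          refine ⟨hr.1.1, hr.1.2.1, hr.1.2.2.1, chain'_iff_zip.mpr ?_⟩
          intro ε hε
          have hεE : (ε.1, ε.2) ∈ E \ {e} :=
            chain'_iff_zip.mp hr.1.2.2.2 ε hε
          refine ⟨hεE.1, ?_⟩
          have := hrdisj ε hε
          simpa [hS] using this
        refine ⟨hrdi, fun s hs => hr.2 s ?_⟩
        exact dipath_mono (Set.diff_subset_diff_right (by simpa using heS)) hs
      exact huniq S hSE x y p q
        (key ei hi p hp hpdisj) (key ej hj q hq hqdisj)
    · -- ej not on sp : q = sp, disjointness forces sp to have no edges,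
      -- contradicting ei ∈ pathEdges sp
      have hq' : q = sp := eq_sp_of_not_mem E cost huniq x y ej hej sp hsp q hq hj
      exact absurd hi (hqdisj ei (hq' ▸ hi))
  · -- ei not on sp : p = sp, hence sp has no edges, hence q = sp = p
    have hp' : p = sp := eq_sp_of_not_mem E cost huniq x y ei hei sp hsp p hp hi
    have hempty : pathEdges sp = [] := by
      rw [List.eq_nil_iff_forall_not_mem]
      intro ε hε
      exact hpdisj ε (hp' ▸ hε) hε
    have hj : ej ∉ pathEdges sp := by simp [hempty]
    have hq' : q = sp := eq_sp_of_not_mem E cost huniq x y ej hej sp hsp q hq hj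
    rw [hp', hq']
end
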